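/- Let χ ∈ [0,1], λ₁, λ₂ > 0, m ∈ ℂ, and real numbers u₁ = a₀+a₁, u₂ = a₀-a₁, v₁ = b₀+b₁, v₂ = b₀-b₁, c ∈ ℝ. Suppose for all φ₁,φ₂,φ₃,φ₄ ∈ ℂ: |φ₁|²u₁ + |φ₂|²u₂ + |φ₃|²v₁ + |φ₄|²v₂ ≥ 2Re{(φ̄₁φ₄ - φ̄₂φ₃)m}·c. Then χ(λ₁u₁ + λ₂u₂) + (1-χ)(λ₁v₁ + λ₂v₂) ≥ 4√(χ(1-χ))·√(λ₁λ₂)·|m|·|c|. -/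

import Mathlib

open Complex

theorem stmt_10 (χ lam1 lam2 : ℝ) (hχ : χ ∈ Set.Icc (0:ℝ) 1)
    (hlam1 : 0 < lam1) (hlam2 : 0 < lam2) (m : ℂ)
    (u1 u2 v1 v2 c : ℝ)
    (h : ∀ φ1 φ2 φ3 φ4 : ℂ,
      (‖φ1‖)^2 * u1 + (‖φ2‖)^2 * u2 +
      (‖φ3‖)^2 * v1 + (‖φ4‖)^2 * v2 ≥
      2 * (((starRingEnd ℂ) φ1 * φ4 - (starRingEnd ℂ) φ2 * φ3) * m).re * c) :
    χ * (lam1 * u1 + lam2 * u2) + (1 - χ) * (lam1 * v1 + lam2 * v2) ≥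
      4 * Real.sqrt (χ * (1 - χ)) * Real.sqrt (lam1 * lam2) * ‖m‖ * |c| := by
  obtain ⟨hχ0, hχ1⟩ := hχ
  have h1χ : (0:ℝ) ≤ 1 - χ := by linarith
  set a1 := Real.sqrt (χ*lam1) with ha1
  set a2 := Real.sqrt (χ*lam2) with ha2
  set b1 := Real.sqrt ((1-χ)*lam1) with hb1
  set b2 := Real.sqrt ((1-χ)*lam2) with hb2
  have sa1 : a1^2 = χ*lam1 := Real.sq_sqrt (by positivity)
  have sa2 : a2^2 = χ*lam2 := Real.sq_sqrt (by positivity)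
  have sb1 : b1^2 = (1-χ)*lam1 := Real.sq_sqrt (by positivity)
  have sb2 : b2^2 = (1-χ)*lam2 := Real.sq_sqrt (by positivity)
  have e1 : a1 * b2 = Real.sqrt (χ*(1-χ)) * Real.sqrt (lam1*lam2) := by
    rw [← Real.sqrt_mul (by positivity), ← Real.sqrt_mul (by positivity)]
    congr 1; ring
  have e2 : a2 * b1 = Real.sqrt (χ*(1-χ)) * Real.sqrt (lam1*lam2) := by
    rw [← Real.sqrt_mul (by positivity), ← Real.sqrt_mul (by positivity)]
    congr 1; ring
  by_cases hmc : m * (c:ℂ) = 0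
  · have habs : ‖m‖ * |c| = 0 := by
      rcases mul_eq_zero.1 hmc with h0 | h0
      · simp [h0]
      · simp [Complex.ofReal_eq_zero.1 h0]
    have hkey := h (a1:ℂ) (a2:ℂ) (-(b1:ℂ)) (b2:ℂ)
    have hrhs : 2 * (((starRingEnd ℂ) (a1:ℂ) * (b2:ℂ) -
        (starRingEnd ℂ) (a2:ℂ) * (-(b1:ℂ))) * m).re * c = 0 := by
      rcases mul_eq_zero.1 hmc with h0 | h0
      · simp [h0]
      · rw [Complex.ofReal_eq_zero.1 h0]; ring
    rw [hrhs] at hkey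
    simp only [Complex.norm_real, Real.norm_eq_abs, norm_neg, _root_.sq_abs] at hkey
    calc χ * (lam1 * u1 + lam2 * u2) + (1 - χ) * (lam1 * v1 + lam2 * v2)
        ≥ 0 := by
          rw [sa1, sa2, sb1, sb2] at hkey; linarith
      _ = 4 * Real.sqrt (χ * (1 - χ)) * Real.sqrt (lam1 * lam2) * ‖m‖ * |c| := by
          rw [mul_assoc, habs]; ring
  · set e : ℂ := (starRingEnd ℂ) (m * (c:ℂ)) / (‖m * (c:ℂ)‖ : ℂ) with he
    have habsne : (‖m * (c:ℂ)‖ : ℝ) ≠ 0 := by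
      simpa using hmc
    have habse : ‖e‖ = 1 := by
      rw [he, norm_div, Complex.norm_conj, Complex.norm_real, Real.norm_eq_abs,
        _root_.abs_of_nonneg (norm_nonneg _), div_self habsne]
    have hemc : e * (m * (c:ℂ)) = (‖m * (c:ℂ)‖ : ℂ) := by
      rw [he, div_mul_eq_mul_div, Complex.conj_mul', sq]
      field_simp
    have hkey := h (a1:ℂ) (a2:ℂ) (-((b1:ℂ)*e)) ((b2:ℂ)*e)
    have hprod : ((starRingEnd ℂ) (a1:ℂ) * ((b2:ℂ)*e) -
        (starRingEnd ℂ) (a2:ℂ) * (-((b1:ℂ)*e))) * m * (c:ℂ)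
        = ((a1*b2 + a2*b1 : ℝ) : ℂ) * (e * (m * (c:ℂ))) := by
      simp only [Complex.conj_ofReal, Complex.ofReal_add, Complex.ofReal_mul]
      ring
    have hre : 2 * (((starRingEnd ℂ) (a1:ℂ) * ((b2:ℂ)*e) -
        (starRingEnd ℂ) (a2:ℂ) * (-((b1:ℂ)*e))) * m).re * c
        = 2 * (a1*b2 + a2*b1) * (‖m‖ * |c|) := by
      have : (((starRingEnd ℂ) (a1:ℂ) * ((b2:ℂ)*e) -
          (starRingEnd ℂ) (a2:ℂ) * (-((b1:ℂ)*e))) * m).re * c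
          = (((starRingEnd ℂ) (a1:ℂ) * ((b2:ℂ)*e) -
          (starRingEnd ℂ) (a2:ℂ) * (-((b1:ℂ)*e))) * m * (c:ℂ)).re := by
        rw [Complex.mul_re]; simp
      rw [mul_assoc, this, hprod, hemc, ← Complex.ofReal_mul, Complex.ofReal_re,
        norm_mul, Complex.norm_real, Real.norm_eq_abs]
      ring
    rw [ge_iff_le, hre] at hkey
    have hlhs : (‖(a1:ℂ)‖)^2 * u1 + (‖(a2:ℂ)‖)^2 * u2 +
        (‖-((b1:ℂ)*e)‖)^2 * v1 + (‖(b2:ℂ)*e‖)^2 * v2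
        = χ * (lam1 * u1 + lam2 * u2) + (1 - χ) * (lam1 * v1 + lam2 * v2) := by
      simp only [norm_neg, norm_mul, Complex.norm_real, Real.norm_eq_abs, habse, mul_one,
        _root_.sq_abs]
      rw [sa1, sa2, sb1, sb2]; ring
    rw [hlhs] at hkey
    rw [ge_iff_le]
    calc 4 * Real.sqrt (χ * (1 - χ)) * Real.sqrt (lam1 * lam2) * ‖m‖ * |c|
        = 2 * (a1*b2 + a2*b1) * (‖m‖ * |c|) := by rw [e1, e2]; ring
      _ ≤ _ := hkey
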